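/- Let $g\geq 2$ be an integer and $m=p_1^{e_1}\cdots p_r^{e_r}$. Then the set $S$ of natural numbers $u$ with $\gcd(u,gm)=1$ and $p_j^{e_j}\nmid \mathrm{ord}_g(u)$ for all $1\leq j\leq r$ is completely multiplicative: for all naturals $x,y$, $xy\in S$ if and only if $x\in S$ and $y\in S$. -/

import Mathlib

/-- If `q ∣ b - 1` then `q^(f+1) ∣ b^(q^f) - 1`. -/
lemma aux_lift (q : ℕ) (b : ℤ) (h : (q : ℤ) ∣ b - 1) :
    ∀ f : ℕ, ((q : ℤ) ^ (f + 1)) ∣ b ^ (q ^ f) - 1 := by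
  intro f
  induction f with
  | zero => simpa using h
  | succ f ih =>
    set c : ℤ := b ^ (q ^ f) with hc
    have hq1 : (q : ℤ) ∣ c - 1 := dvd_trans (dvd_pow_self _ (Nat.succ_ne_zero f)) ih
    have hsum : (q : ℤ) ∣ ∑ i ∈ Finset.range q, c ^ i := by
      have h1 : ∑ i ∈ Finset.range q, c ^ i
          = (∑ i ∈ Finset.range q, (c ^ i - 1)) + q := by
        rw [Finset.sum_sub_distrib, Finset.sum_const, Finset.card_range]
        ring
      rw [h1]
      refine Dvd.dvd.add ?_ dvd_rfl
      refine Finset.dvd_sum fun i _ => dvd_trans hq1 ?_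
      have := sub_dvd_pow_sub_pow c 1 i
      simpa using this
    have hgeom : (∑ i ∈ Finset.range q, c ^ i) * (c - 1) = c ^ q - 1 := geom_sum_mul c q
    have : ((q : ℤ) ^ (f + 1 + 1)) ∣ c ^ q - 1 := by
      rw [← hgeom, pow_succ, mul_comm ((q:ℤ) ^ (f+1)) (q:ℤ)]
      exact mul_dvd_mul hsum ih
    have hcq : c ^ q = b ^ (q ^ (f + 1)) := by
      rw [hc, ← pow_mul, ← pow_succ]
    rwa [hcq] at this

/-- `(g : ZMod n)^k = 1 ↔ g^k ≡ 1 [MOD n]`. -/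
lemma aux_pow_eq_one_iff (g n k : ℕ) :
    (g : ZMod n) ^ k = 1 ↔ g ^ k ≡ 1 [MOD n] := by
  rw [← ZMod.natCast_eq_natCast_iff]
  push_cast
  rfl

/-- Order modulo a divisor divides the order. -/
lemma aux_order_dvd (g a b : ℕ) (h : a ∣ b) :
    orderOf ((g : ZMod a)) ∣ orderOf ((g : ZMod b)) := by
  have := orderOf_map_dvd (ZMod.castHom h (ZMod a)).toMonoidHom ((g : ZMod b))
  simpa using this

/-- Order modulo `q^f` divides `q^f * (order modulo q)`. -/
lemma aux_order_pow (g q f : ℕ) (hf : 1 ≤ f) :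
    orderOf ((g : ZMod (q ^ f))) ∣ q ^ (f - 1) * orderOf ((g : ZMod q)) := by
  set d := orderOf ((g : ZMod q)) with hd
  rw [orderOf_dvd_iff_pow_eq_one, aux_pow_eq_one_iff]
  have h1 : (g : ZMod q) ^ d = 1 := pow_orderOf_eq_one _
  have h2 : g ^ d ≡ 1 [MOD q] := (aux_pow_eq_one_iff g q d).mp h1
  have h3 : (q : ℤ) ∣ (g : ℤ) ^ d - 1 := by
    have := (Nat.modEq_iff_dvd (n := q) (a := 1) (b := g ^ d)).mp h2.symm
    push_cast at this ⊢
    simpa using this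
  have h5 : ((q : ℤ)) ^ f ∣ (g : ℤ) ^ (q ^ (f - 1) * d) - 1 := by
    have h4 := aux_lift q ((g : ℤ) ^ d) h3 (f - 1)
    rw [Nat.sub_add_cancel hf] at h4
    rwa [← pow_mul, mul_comm d (q ^ (f - 1))] at h4
  rw [Nat.modEq_iff_dvd]
  push_cast
  convert dvd_neg.mpr h5 using 1
  · rfl
  · ring

/-- positivity of the order when `g` is coprime to `n > 0`. -/
lemma aux_order_pos (g n : ℕ) (hn : 0 < n) (h : Nat.Coprime g n) :
    0 < orderOf ((g : ZMod n)) := by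
  rw [orderOf_pos_iff, isOfFinOrder_iff_pow_eq_one]
  exact ⟨n.totient, Nat.totient_pos.mpr hn, (aux_pow_eq_one_iff g n _).mpr (Nat.ModEq.pow_totient h)⟩

/-- Main lemma: a prime power dividing the order mod `n` divides the order mod some prime
factor of `n`. -/
lemma aux_main (p e g : ℕ) (hp : p.Prime) (he : 1 ≤ e) :
    ∀ n : ℕ, 0 < n → Nat.Coprime g n → ¬ p ∣ n →
      p ^ e ∣ orderOf ((g : ZMod n)) →
      ∃ q : ℕ, q.Prime ∧ q ∣ n ∧ p ^ e ∣ orderOf ((g : ZMod q)) := by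
  intro n
  induction n using Nat.strong_induction_on with
  | _ n IH =>
    intro hn hgn hpn hdvd
    rcases eq_or_lt_of_le (show 1 ≤ n from hn) with h1 | h1
    · -- n = 1
      exfalso
      have h1' : n = 1 := h1.symm
      subst h1'
      have hord : orderOf ((g : ZMod 1)) = 1 :=
        orderOf_eq_one_iff.mpr (Subsingleton.elim _ _)
      rw [hord, Nat.dvd_one] at hdvd
      have h2 : 1 < p ^ e := Nat.one_lt_pow (by omega) hp.one_lt
      omega
    · -- n ≥ 2
      set q := n.minFac with hq
      have hqp : q.Prime := Nat.minFac_prime (by omega)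
      have hqn : q ∣ n := Nat.minFac_dvd n
      set f := n.factorization q with hf
      have hf1 : 1 ≤ f := by
        rw [hf]
        exact (Nat.Prime.factorization_pos_of_dvd hqp (by omega) hqn)
      set n' := n / q ^ f with hn'
      have hsplit : q ^ f * n' = n := Nat.ordProj_mul_ordCompl_eq_self n q
      have hqn' : ¬ q ∣ n' := Nat.not_dvd_ordCompl hqp (by omega)
      have hcop : Nat.Coprime (q ^ f) n' :=
        Nat.Coprime.pow_left _ ((Nat.Prime.coprime_iff_not_dvd hqp).mpr hqn')
      -- orders
      set A := orderOf ((g : ZMod (q ^ f))) with hA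
      set B := orderOf ((g : ZMod n')) with hB
      have hn'dvd : n' ∣ n := ⟨q ^ f, by rw [← hsplit]; ring⟩
      have hqfdvd : q ^ f ∣ n := ⟨n', hsplit.symm⟩
      have hApos : 0 < A :=
        aux_order_pos g _ (Nat.pow_pos (n := f) hqp.pos) (hgn.coprime_dvd_right hqfdvd)
      have hBpos : 0 < B := by
        refine aux_order_pos g _ ?_ (hgn.coprime_dvd_right hn'dvd)
        exact Nat.pos_of_dvd_of_pos hn'dvd hn
      -- order mod n divides lcm A B
      have hord_lcm : orderOf ((g : ZMod n)) ∣ Nat.lcm A B := by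
        rw [orderOf_dvd_iff_pow_eq_one, aux_pow_eq_one_iff]
        have e1 : g ^ Nat.lcm A B ≡ 1 [MOD q ^ f] := by
          rw [← aux_pow_eq_one_iff]
          exact orderOf_dvd_iff_pow_eq_one.mp (Nat.dvd_lcm_left A B)
        have e2 : g ^ Nat.lcm A B ≡ 1 [MOD n'] := by
          rw [← aux_pow_eq_one_iff]
          exact orderOf_dvd_iff_pow_eq_one.mp (Nat.dvd_lcm_right A B)
        have := (Nat.modEq_and_modEq_iff_modEq_mul hcop).mp ⟨e1, e2⟩
        rwa [hsplit] at this
      have hpe_lcm : p ^ e ∣ Nat.lcm A B := hdvd.trans hord_lcm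
      -- p^e divides A or B
      have hlcm_ne : Nat.lcm A B ≠ 0 := Nat.lcm_ne_zero hApos.ne' hBpos.ne'
      have hcases : p ^ e ∣ A ∨ p ^ e ∣ B := by
        by_contra hcon
        push_neg at hcon
        obtain ⟨c1, c2⟩ := hcon
        rw [hp.pow_dvd_iff_le_factorization hlcm_ne] at hpe_lcm
        rw [hp.pow_dvd_iff_le_factorization hApos.ne'] at c1
        rw [hp.pow_dvd_iff_le_factorization hBpos.ne'] at c2
        rw [Nat.factorization_lcm hApos.ne' hBpos.ne'] at hpe_lcm
        simp only [Finsupp.sup_apply, le_sup_iff] at hpe_lcm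
        omega
      rcases hcases with hcA | hcB
      · -- via q
        have hAdvd : A ∣ q ^ (f - 1) * orderOf ((g : ZMod q)) := aux_order_pow g q f hf1
        have hpq : p ≠ q := fun h => hpn (h ▸ hqn)
        have hcop2 : Nat.Coprime (p ^ e) (q ^ (f - 1)) :=
          Nat.Coprime.pow e (f - 1) ((Nat.coprime_primes hp hqp).mpr hpq)
        exact ⟨q, hqp, hqn, hcop2.dvd_of_dvd_mul_left (hcA.trans hAdvd)⟩
      · -- via induction on n'
        have hn'lt : n' < n := by
          have h2 : 2 ≤ q ^ f := le_trans hqp.two_le (Nat.le_self_pow (by omega) q)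
          have := hsplit
          nlinarith [Nat.pos_of_dvd_of_pos hn'dvd hn]
        obtain ⟨q', hq'p, hq'n', hq'ord⟩ :=
          IH n' hn'lt (Nat.pos_of_dvd_of_pos hn'dvd hn) (hgn.coprime_dvd_right hn'dvd)
            (fun h => hpn (h.trans hn'dvd)) hcB
        exact ⟨q', hq'p, hq'n'.trans hn'dvd, hq'ord⟩

theorem stmt_13 (g : ℕ) (hg : 2 ≤ g) (m : ℕ) (hm : 1 < m)
    (S : Set ℕ)
    (hS : S = {u : ℕ | Nat.Coprime u (g * m) ∧
      ∀ p ∈ m.primeFactors, ¬ p ^ m.factorization p ∣ orderOf ((g : ZMod u))}) :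
    ∀ x y : ℕ, x * y ∈ S ↔ x ∈ S ∧ y ∈ S := by
  subst hS
  intro x y
  simp only [Set.mem_setOf_eq]
  constructor
  · rintro ⟨hcop, hord⟩
    have hcx : Nat.Coprime x (g * m) := Nat.Coprime.coprime_dvd_left (dvd_mul_right x y) hcop
    have hcy : Nat.Coprime y (g * m) := Nat.Coprime.coprime_dvd_left (dvd_mul_left y x) hcop
    refine ⟨⟨hcx, fun p hp hpd => hord p hp ?_⟩, ⟨hcy, fun p hp hpd => hord p hp ?_⟩⟩
    · exact hpd.trans (aux_order_dvd g x (x * y) (dvd_mul_right x y))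
    · exact hpd.trans (aux_order_dvd g y (x * y) (dvd_mul_left y x))
  · rintro ⟨⟨hcx, hx⟩, ⟨hcy, hy⟩⟩
    refine ⟨Nat.Coprime.mul hcx hcy, fun p hp hpd => ?_⟩
    have hpprime : p.Prime := Nat.prime_of_mem_primeFactors hp
    have hpm : p ∣ m := Nat.dvd_of_mem_primeFactors hp
    have he : 1 ≤ m.factorization p :=
      hpprime.factorization_pos_of_dvd (by omega) hpm
    -- x, y positive
    have hgm4 : 4 ≤ g * m := by nlinarith
    have hxpos : 0 < x := by
      rcases Nat.eq_zero_or_pos x with h | h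
      · exfalso; rw [h] at hcx; simp [Nat.Coprime] at hcx; omega
      · exact h
    have hypos : 0 < y := by
      rcases Nat.eq_zero_or_pos y with h | h
      · exfalso; rw [h] at hcy; simp [Nat.Coprime] at hcy; omega
      · exact h
    -- coprimality hypotheses for aux_main
    have hgx : Nat.Coprime g x := (hcx.coprime_dvd_right (dvd_mul_right g m)).symm
    have hgy : Nat.Coprime g y := (hcy.coprime_dvd_right (dvd_mul_right g m)).symm
    have hgxy : Nat.Coprime g (x * y) := Nat.Coprime.mul_right hgx hgy
    have hpxy : ¬ p ∣ x * y := by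
      intro hd
      have hxy : Nat.Coprime (x * y) m :=
        (Nat.Coprime.mul hcx hcy).coprime_dvd_right (dvd_mul_left m g)
      have hcp : Nat.Coprime p (x * y) := (hxy.coprime_dvd_right hpm).symm
      have h1 : p ∣ Nat.gcd p (x * y) := Nat.dvd_gcd dvd_rfl hd
      rw [Nat.Coprime] at hcp
      rw [hcp, Nat.dvd_one] at h1
      exact hpprime.one_lt.ne' h1
    obtain ⟨q, hqp, hqxy, hqe⟩ :=
      aux_main p (m.factorization p) g hpprime he (x * y) (by positivity) hgxy hpxy hpd
    rcases (Nat.Prime.dvd_mul hqp).mp hqxy with hqx | hqy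
    · exact hx p hp (hqe.trans (aux_order_dvd g q x hqx))
    · exact hy p hp (hqe.trans (aux_order_dvd g q y hqy))
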